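/- Let R be an M×M Hermitian positive semidefinite complex matrix, K ≥ 1 an integer, and t > 0. Then there exists a unique α ≥ 0 satisfying the fixed-point equation α = (1/K)·trace( R · (I_M + (t/(1 + tα))·R)⁻¹ ), where the matrix I_M + (t/(1+tα))·R is invertible because R is positive semidefinite and t/(1+tα) ≥ 0. -/

import Mathlib

open Matrix ComplexOrder Finset

private lemma gbound {e g1 g2 : ℝ} (he : 0 ≤ e) (h1n : 0 ≤ g1) (h1 : g1 ≤ 1)
    (h2n : 0 ≤ g2) (h2 : g2 ≤ 1) : e * g1 * g2 ≤ e / 2 * (g1 + g2) := by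
  nlinarith [mul_nonneg he (mul_nonneg h1n (sub_nonneg.mpr h2)), mul_nonneg he (mul_nonneg h2n (sub_nonneg.mpr h1))]

lemma scalar_lemma {M : ℕ} (lam : Fin M → ℝ) (hlam : ∀ i, 0 ≤ lam i)
    (K : ℕ) (hK : 1 ≤ K) (t : ℝ) (ht : 0 < t) :
    ∃! α : ℝ, 0 ≤ α ∧
      α = (K : ℝ)⁻¹ * ∑ i, lam i / (1 + t / (1 + t * α) * lam i) := by
  have hK0 : (0:ℝ) < K := by exact_mod_cast hK
  have hden : ∀ α : ℝ, 0 ≤ α → 0 < 1 + t * α := fun α hα => by positivity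
  have hc : ∀ α : ℝ, 0 ≤ α → 0 < t / (1 + t * α) := fun α hα => div_pos ht (hden α hα)
  have hd2 : ∀ α : ℝ, 0 ≤ α → ∀ i, 0 < 1 + t / (1 + t * α) * lam i := fun α hα i => by
    have h1 := (hc α hα).le
    have h2 := hlam i
    positivity
  set S : ℝ → ℝ := fun α => (K : ℝ)⁻¹ * ∑ i, lam i / (1 + t / (1 + t * α) * lam i) with hS
  have hSnn : ∀ α : ℝ, 0 ≤ α → 0 ≤ S α := by
    intro α hα
    refine mul_nonneg (by positivity) (Finset.sum_nonneg fun i _ => ?_)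
    exact div_nonneg (hlam i) (hd2 α hα i).le
  set B : ℝ := (K : ℝ)⁻¹ * ∑ i, lam i with hB
  have hB0 : 0 ≤ B := mul_nonneg (by positivity) (Finset.sum_nonneg fun i _ => hlam i)
  have hSle : ∀ α : ℝ, 0 ≤ α → S α ≤ B := by
    intro α hα
    refine mul_le_mul_of_nonneg_left (Finset.sum_le_sum fun i _ => ?_) (by positivity)
    have h1 : 1 ≤ 1 + t / (1 + t * α) * lam i := by
      nlinarith [(hc α hα).le, hlam i, mul_nonneg (hc α hα).le (hlam i)]
    exact div_le_self (hlam i) h1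
  -- existence via IVT
  have hcont : ContinuousOn (fun α => α - S α) (Set.Icc 0 B) := by
    refine (continuousOn_id).sub ?_
    refine ContinuousOn.mul continuousOn_const ?_
    refine continuousOn_finset_sum _ fun i _ => ?_
    refine ContinuousOn.div continuousOn_const ?_ ?_
    · refine ContinuousOn.add continuousOn_const (ContinuousOn.mul ?_ continuousOn_const)
      exact ContinuousOn.div continuousOn_const
        (Continuous.continuousOn (by continuity))
        (fun α hα => (hden α hα.1).ne')
    · exact fun α hα => (hd2 α hα.1 i).ne'
  have h0 : (fun α => α - S α) 0 ≤ 0 := by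
    simpa using hSnn 0 le_rfl
  have hBv : 0 ≤ (fun α => α - S α) B := by
    simp only
    have := hSle B hB0
    linarith
  obtain ⟨α, hαmem, hα⟩ := intermediate_value_Icc hB0 hcont ⟨h0, hBv⟩
  have hfix : α = S α := by
    have h : α - S α = 0 := hα
    linarith
  -- uniqueness core
  have key : ∀ a b : ℝ, 0 ≤ a → 0 ≤ b → a = S a → b = S b → a ≤ b → b ≤ a := by
    intro a b ha hb hfa hfb hab
    simp only [hS] at hfa hfb
    set c1 : ℝ := t / (1 + t * a) with hc1
    set c2 : ℝ := t / (1 + t * b) with hc2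
    have hda := hden a ha
    have hdb := hden b hb
    have hc1p : 0 < c1 := hc a ha
    have hc2p : 0 < c2 := hc b hb
    have hkey : c1 - c2 = c1 * c2 * (b - a) := by
      rw [hc1, hc2]
      field_simp
      ring
    have hq1 : c1 * a < 1 := by
      rw [hc1, div_mul_eq_mul_div, div_lt_one hda]; linarith
    have hq2 : c2 * b < 1 := by
      rw [hc2, div_mul_eq_mul_div, div_lt_one hdb]; linarith
    have hD1 : ∀ i, (0:ℝ) < 1 + c1 * lam i := fun i => hd2 a ha i
    have hD2 : ∀ i, (0:ℝ) < 1 + c2 * lam i := fun i => hd2 b hb i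
    clear_value c1 c2
    clear hc1 hc2
    -- sums equal K * fixedpoint
    have hsa : ∑ i, lam i / (1 + c1 * lam i) = K * a := by
      rw [hfa]; field_simp; exact Finset.sum_congr rfl fun i _ => by ring
    have hsb : ∑ i, lam i / (1 + c2 * lam i) = K * b := by
      rw [hfb]; field_simp; exact Finset.sum_congr rfl fun i _ => by ring
    -- termwise bound
    have hterm : ∀ i ∈ Finset.univ, lam i / (1 + c2 * lam i) - lam i / (1 + c1 * lam i)
        ≤ (b - a) / 2 * (c1 * lam i / (1 + c1 * lam i) + c2 * lam i / (1 + c2 * lam i)) := by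
      intro i _
      have d1 : (0:ℝ) < 1 + c1 * lam i := hD1 i
      have d2 : (0:ℝ) < 1 + c2 * lam i := hD2 i
      have hli := hlam i
      have e2 : lam i * (1 + c1 * lam i) - (1 + c2 * lam i) * lam i
          = (b - a) * (c1 * lam i) * (c2 * lam i) := by
        linear_combination (lam i)^2 * hkey
      have heq : lam i / (1 + c2 * lam i) - lam i / (1 + c1 * lam i)
          = (b - a) * (c1 * lam i / (1 + c1 * lam i)) * (c2 * lam i / (1 + c2 * lam i)) := by
        rw [div_sub_div _ _ d2.ne' d1.ne', e2]
        field_simp [d1.ne', d2.ne']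
      rw [heq]
      have hg1 : c1 * lam i / (1 + c1 * lam i) ≤ 1 := by
        rw [div_le_one d1]; linarith
      have hg2 : c2 * lam i / (1 + c2 * lam i) ≤ 1 := by
        rw [div_le_one d2]; linarith
      have hg1n : 0 ≤ c1 * lam i / (1 + c1 * lam i) := by positivity
      have hg2n : 0 ≤ c2 * lam i / (1 + c2 * lam i) := by positivity
      exact gbound (sub_nonneg.mpr hab) hg1n hg1 hg2n hg2
    have hsum : ∑ i, lam i / (1 + c2 * lam i) - ∑ i, lam i / (1 + c1 * lam i)
        ≤ (b - a) / 2 * (c1 * (K * a) + c2 * (K * b)) := by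
      rw [← Finset.sum_sub_distrib]
      calc ∑ i, (lam i / (1 + c2 * lam i) - lam i / (1 + c1 * lam i))
          ≤ ∑ i, (b - a) / 2 * (c1 * lam i / (1 + c1 * lam i) + c2 * lam i / (1 + c2 * lam i)) :=
            Finset.sum_le_sum hterm
        _ = (b - a) / 2 * (c1 * (K * a) + c2 * (K * b)) := by
            rw [← Finset.mul_sum, Finset.sum_add_distrib]
            congr 1
            rw [← hsa, ← hsb, Finset.mul_sum, Finset.mul_sum]
            congr 1 <;> (apply Finset.sum_congr rfl; intro i _; rw [mul_div_assoc])
    -- conclude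
    have hba : b - a ≤ (K:ℝ)⁻¹ * ((b - a) / 2 * (c1 * (K * a) + c2 * (K * b))) := by
      calc b - a = (K:ℝ)⁻¹ * (∑ i, lam i / (1 + c2 * lam i) - ∑ i, lam i / (1 + c1 * lam i)) := by
            rw [hsa, hsb]; field_simp
        _ ≤ (K:ℝ)⁻¹ * ((b - a) / 2 * (c1 * (↑K * a) + c2 * (↑K * b))) :=
            mul_le_mul_of_nonneg_left hsum (by positivity)
    have hba' : b - a ≤ (b - a) / 2 * (c1 * a + c2 * b) := by
      have heq2 : (K:ℝ)⁻¹ * ((b - a) / 2 * (c1 * (K * a) + c2 * (K * b)))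
          = (b - a) / 2 * (c1 * a + c2 * b) := by
        field_simp
      linarith [hba, heq2.le, heq2.ge]
    by_contra hba2
    push_neg at hba2
    have hs : 0 < b - a := sub_pos.mpr hba2
    have hlt : (b - a) / 2 * (c1 * a + c2 * b) < (b - a) / 2 * 2 := by
      apply mul_lt_mul_of_pos_left (by linarith) (by linarith)
    linarith
  refine ⟨α, ⟨hαmem.1, hfix⟩, ?_⟩
  intro y hy
  rcases le_total y α with h | h
  · exact le_antisymm h (key y α hy.1 hαmem.1 hy.2 hfix h)
  · exact le_antisymm (key α y hαmem.1 hy.1 hfix hy.2 h) h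


lemma matrix_facts {M : ℕ} (R : Matrix (Fin M) (Fin M) ℂ) (hR : R.PosSemidef)
    (c : ℝ) (hc : 0 ≤ c) :
    IsUnit ((1 : Matrix (Fin M) (Fin M) ℂ) + (c : ℂ) • R) ∧
    (R * ((1 : Matrix (Fin M) (Fin M) ℂ) + (c : ℂ) • R)⁻¹).trace
      = ((∑ i, hR.1.eigenvalues i / (1 + c * hR.1.eigenvalues i) : ℝ) : ℂ) := by
  set lam := hR.1.eigenvalues with hlamdef
  have hlam : ∀ i, 0 ≤ lam i := hR.eigenvalues_nonneg
  set U : Matrix (Fin M) (Fin M) ℂ := (hR.1.eigenvectorUnitary : Matrix (Fin M) (Fin M) ℂ) with hUdef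
  have hU1 : U * star U = 1 := mem_unitaryGroup_iff.mp hR.1.eigenvectorUnitary.2
  have hU2 : star U * U = 1 := mem_unitaryGroup_iff'.mp hR.1.eigenvectorUnitary.2
  have key : ∀ X : Matrix (Fin M) (Fin M) ℂ, star U * (U * X) = X := fun X => by
    rw [← Matrix.mul_assoc, hU2, Matrix.one_mul]
  have hspec : R = U * diagonal (fun i => (lam i : ℂ)) * star U := by
    have h := hR.1.spectral_theorem
    exact h
  have hgpos : ∀ i, (0:ℝ) < 1 + c * lam i := fun i => by
    have := hlam i; positivity
  have hg0 : ∀ i, ((1 + c * lam i : ℝ) : ℂ) ≠ 0 := fun i =>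
    Complex.ofReal_ne_zero.mpr (hgpos i).ne'
  have hdiag : (1 : Matrix (Fin M) (Fin M) ℂ) + (c : ℂ) • R
      = U * diagonal (fun i => ((1 + c * lam i : ℝ) : ℂ)) * star U := by
    have h1 : diagonal (fun i => ((1 + c * lam i : ℝ) : ℂ))
        = 1 + (c : ℂ) • diagonal (fun i => (lam i : ℂ)) := by
      rw [← diagonal_one, ← diagonal_smul, diagonal_add]
      congr 1
      funext i
      push_cast
      simp
    rw [h1, Matrix.mul_add, Matrix.add_mul, Matrix.mul_one, hU1,
      Matrix.mul_smul, Matrix.smul_mul, ← hspec]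
  have hmul : (U * diagonal (fun i => ((1 + c * lam i : ℝ) : ℂ)) * star U) *
      (U * diagonal (fun i => (((1 + c * lam i : ℝ) : ℂ))⁻¹) * star U) = 1 := by
    simp only [Matrix.mul_assoc, key]
    rw [← Matrix.mul_assoc (diagonal _), diagonal_mul_diagonal]
    simp only [mul_inv_cancel₀ (hg0 _)]
    rw [diagonal_one, Matrix.one_mul, hU1]
  have hisUnit : IsUnit ((1 : Matrix (Fin M) (Fin M) ℂ) + (c : ℂ) • R) := by
    rw [hdiag]
    have hdet := congrArg Matrix.det hmul
    rw [Matrix.det_mul, Matrix.det_one] at hdet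
    exact (Matrix.isUnit_iff_isUnit_det _).mpr (IsUnit.of_mul_eq_one _ hdet)
  have hinv : ((1 : Matrix (Fin M) (Fin M) ℂ) + (c : ℂ) • R)⁻¹
      = U * diagonal (fun i => (((1 + c * lam i : ℝ) : ℂ))⁻¹) * star U := by
    rw [hdiag]
    exact inv_eq_right_inv hmul
  refine ⟨hisUnit, ?_⟩
  rw [hinv, hspec]
  simp only [Matrix.mul_assoc, key]
  rw [← Matrix.mul_assoc (diagonal _), diagonal_mul_diagonal]
  rw [← Matrix.mul_assoc, Matrix.trace_mul_comm, key]
  rw [trace_diagonal]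
  push_cast
  rfl

/-- for `R` Hermitian positive semidefinite, `K ≥ 1` and `t > 0`, the matrix
`I_M + (t/(1+tα)) R` is invertible for every `α ≥ 0`, and there exists a unique `α ≥ 0`
satisfying the fixed-point equation `α = (1/K) tr(R (I_M + (t/(1+tα)) R)⁻¹)`. -/
theorem stmt10 {M : ℕ} (R : Matrix (Fin M) (Fin M) ℂ) (hR : R.PosSemidef)
    (K : ℕ) (hK : 1 ≤ K) (t : ℝ) (ht : 0 < t) :
    (∀ α : ℝ, 0 ≤ α →
      IsUnit ((1 : Matrix (Fin M) (Fin M) ℂ) + ((t / (1 + t * α) : ℝ) : ℂ) • R)) ∧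
    ∃! α : ℝ, 0 ≤ α ∧
      (α : ℂ) = (K : ℂ)⁻¹ *
        (R * ((1 : Matrix (Fin M) (Fin M) ℂ) + ((t / (1 + t * α) : ℝ) : ℂ) • R)⁻¹).trace := by
  have hcnn : ∀ α : ℝ, 0 ≤ α → (0:ℝ) ≤ t / (1 + t * α) := fun α hα =>
    div_nonneg ht.le (by positivity)
  have hfacts := fun (α : ℝ) (hα : 0 ≤ α) => matrix_facts R hR (t / (1 + t * α)) (hcnn α hα)
  refine ⟨fun α hα => (hfacts α hα).1, ?_⟩
  obtain ⟨α, ⟨hα0, hfix⟩, huniq⟩ :=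
    scalar_lemma hR.1.eigenvalues hR.eigenvalues_nonneg K hK t ht
  have conv : ∀ β : ℝ, 0 ≤ β →
      (((β : ℂ) = (K : ℂ)⁻¹ *
          (R * ((1 : Matrix (Fin M) (Fin M) ℂ) + ((t / (1 + t * β) : ℝ) : ℂ) • R)⁻¹).trace) ↔
        β = (K : ℝ)⁻¹ * ∑ i, hR.1.eigenvalues i / (1 + t / (1 + t * β) * hR.1.eigenvalues i)) := by
    intro β hβ
    rw [(hfacts β hβ).2]
    rw [show (K : ℂ)⁻¹ *
        ((∑ i, hR.1.eigenvalues i / (1 + t / (1 + t * β) * hR.1.eigenvalues i) : ℝ) : ℂ)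
        = (((K : ℝ)⁻¹ * ∑ i, hR.1.eigenvalues i /
            (1 + t / (1 + t * β) * hR.1.eigenvalues i) : ℝ) : ℂ) by push_cast; ring]
    exact Complex.ofReal_inj
  refine ⟨α, ⟨hα0, (conv α hα0).mpr hfix⟩, ?_⟩
  intro y hy
  exact huniq y ⟨hy.1, (conv y hy.1).mp hy.2⟩
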